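/- Let (Ω, ℱ, ℙ) be a probability space, let K be a finite index set of size S ≥ 1, let i ∈ K, and let k ≥ 1 be an integer, η ≥ 0, M ≥ 0. Let X_j : Ω → ℝ^d (j ∈ K), G : Ω → ℝ^d, and H_j : Ω → ℝ^d (j ∈ K∖{i}) be random vectors with all squared norms integrable, satisfying E‖X_j‖² ≤ 4·η²·M²·k² for every j ∈ K, E‖G‖² ≤ M², and E‖H_j‖² ≤ M² for every j ∈ K∖{i}. Then E‖(1/S)·Σ_{j∈K} X_j − η·G + (η/S)·Σ_{j∈K∖{i}} H_j‖² ≤ 4·η²·M²·(k + 1)². -/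

import Mathlib

open Finset MeasureTheory

open scoped ENNReal

set_option linter.unusedSectionVars false

section Aux
variable {Ω : Type*} [MeasurableSpace Ω] {E : Type*} [NormedAddCommGroup E] [NormedSpace ℝ E]
  {μ : Measure Ω}

lemma aux_int_eq {f : Ω → E} (hf : MemLp f 2 μ) :
    ∫ ω, ‖f ω‖ ^ 2 ∂μ = (eLpNorm f 2 μ).toReal ^ 2 := by
  rw [hf.eLpNorm_eq_integral_rpow_norm two_ne_zero ENNReal.ofNat_ne_top]
  have key : ∀ x : ℝ, x ^ ((2:ℝ≥0∞).toReal) = x ^ 2 := fun x => by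
    rw [ENNReal.toReal_ofNat, show ((2:ℝ)) = ((2:ℕ):ℝ) by norm_num, Real.rpow_natCast]
  simp_rw [key]
  have hI : 0 ≤ ∫ ω, ‖f ω‖ ^ 2 ∂μ := integral_nonneg fun ω => sq_nonneg _
  rw [ENNReal.toReal_ofReal (by positivity), ← Real.rpow_natCast _ 2, ← Real.rpow_mul hI]
  norm_num

lemma aux_le_of_int {f : Ω → E} (hf : MemLp f 2 μ) {c : ℝ} (hc : 0 ≤ c)
    (h : ∫ ω, ‖f ω‖ ^ 2 ∂μ ≤ c ^ 2) : (eLpNorm f 2 μ).toReal ≤ c := by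
  have h1 := aux_int_eq (μ := μ) hf
  have h2 : (0:ℝ) ≤ (eLpNorm f 2 μ).toReal := ENNReal.toReal_nonneg
  nlinarith [h1 ▸ h]

lemma aux_add {f g : Ω → E} (hf : MemLp f 2 μ) (hg : MemLp g 2 μ) :
    (eLpNorm (f + g) 2 μ).toReal ≤ (eLpNorm f 2 μ).toReal + (eLpNorm g 2 μ).toReal := by
  have h := eLpNorm_add_le hf.1 hg.1 one_le_two
  calc (eLpNorm (f + g) 2 μ).toReal ≤ (eLpNorm f 2 μ + eLpNorm g 2 μ).toReal :=
        ENNReal.toReal_mono (ENNReal.add_ne_top.2 ⟨hf.2.ne, hg.2.ne⟩) h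
    _ = _ := ENNReal.toReal_add hf.2.ne hg.2.ne

lemma aux_smul (c : ℝ) (f : Ω → E) :
    (eLpNorm (c • f) 2 μ).toReal = |c| * (eLpNorm f 2 μ).toReal := by
  rw [eLpNorm_const_smul]
  simp [ENNReal.toReal_mul, Real.norm_eq_abs]

lemma aux_sum {ι : Type*} (s : Finset ι) (f : ι → Ω → E) (hf : ∀ j ∈ s, MemLp (f j) 2 μ) :
    (eLpNorm (∑ j ∈ s, f j) 2 μ).toReal ≤ ∑ j ∈ s, (eLpNorm (f j) 2 μ).toReal := by
  have h := eLpNorm_sum_le (fun j hj => (hf j hj).1) (one_le_two (α := ℝ≥0∞))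
  calc (eLpNorm (∑ j ∈ s, f j) 2 μ).toReal ≤ (∑ j ∈ s, eLpNorm (f j) 2 μ).toReal :=
        ENNReal.toReal_mono (by
          refine (ENNReal.sum_lt_top.2 fun j hj => (hf j hj).2).ne) h
    _ ≤ _ := by rw [ENNReal.toReal_sum fun j hj => (hf j hj).2.ne]

end Aux

/-- Inductive step of the lemma bounding `E‖W_t^i − μ_{r_t}‖² ≤ 4η²M²(t − r_t)²`
for WAGMA-SGD. -/
theorem stmt_1 {d : ℕ} {Ω : Type*} [MeasurableSpace Ω]
    (μ : Measure Ω) [IsProbabilityMeasure μ]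
    {ι : Type*} [DecidableEq ι]
    (K : Finset ι) (S : ℕ) (hS : 1 ≤ S) (hK : K.card = S)
    (i : ι) (hi : i ∈ K)
    (k : ℕ) (hk : 1 ≤ k) (η M : ℝ) (hη : 0 ≤ η) (hM : 0 ≤ M)
    (X : ι → Ω → EuclideanSpace ℝ (Fin d)) (G : Ω → EuclideanSpace ℝ (Fin d))
    (H : ι → Ω → EuclideanSpace ℝ (Fin d))
    (hXmem : ∀ j ∈ K, MemLp (X j) 2 μ)
    (hGmem : MemLp G 2 μ)
    (hHmem : ∀ j ∈ K.erase i, MemLp (H j) 2 μ)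
    (hX : ∀ j ∈ K, ∫ ω, ‖X j ω‖ ^ 2 ∂μ ≤ 4 * η ^ 2 * M ^ 2 * (k : ℝ) ^ 2)
    (hG : ∫ ω, ‖G ω‖ ^ 2 ∂μ ≤ M ^ 2)
    (hH : ∀ j ∈ K.erase i, ∫ ω, ‖H j ω‖ ^ 2 ∂μ ≤ M ^ 2) :
    ∫ ω, ‖((S : ℝ))⁻¹ • ∑ j ∈ K, X j ω - η • G ω
        + (η / (S : ℝ)) • ∑ j ∈ K.erase i, H j ω‖ ^ 2 ∂μ
      ≤ 4 * η ^ 2 * M ^ 2 * ((k : ℝ) + 1) ^ 2 := by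
  have hSpos : (0:ℝ) < (S:ℝ) := by exact_mod_cast hS
  set F1 : Ω → EuclideanSpace ℝ (Fin d) := ((S:ℝ))⁻¹ • (∑ j ∈ K, X j) with hF1def
  set F2 : Ω → EuclideanSpace ℝ (Fin d) := η • G with hF2def
  set F3 : Ω → EuclideanSpace ℝ (Fin d) := (η / (S:ℝ)) • (∑ j ∈ K.erase i, H j) with hF3def
  have hsumX : MemLp (∑ j ∈ K, X j) 2 μ := memLp_finset_sum' K hXmem
  have hsumH : MemLp (∑ j ∈ K.erase i, H j) 2 μ := memLp_finset_sum' _ hHmem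
  have hF1 : MemLp F1 2 μ := hsumX.const_smul _
  have hF2 : MemLp F2 2 μ := hGmem.const_smul _
  have hF3 : MemLp F3 2 μ := hsumH.const_smul _
  have hF : MemLp (F1 - F2 + F3) 2 μ := (hF1.sub hF2).add hF3
  have hfun : (fun ω => ((S : ℝ))⁻¹ • ∑ j ∈ K, X j ω - η • G ω
      + (η / (S : ℝ)) • ∑ j ∈ K.erase i, H j ω) = F1 - F2 + F3 := by
    funext ω
    simp [hF1def, hF2def, hF3def, Finset.sum_apply]
  calc ∫ ω, ‖((S : ℝ))⁻¹ • ∑ j ∈ K, X j ω - η • G ω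
        + (η / (S : ℝ)) • ∑ j ∈ K.erase i, H j ω‖ ^ 2 ∂μ
      = ∫ ω, ‖(F1 - F2 + F3) ω‖ ^ 2 ∂μ := by rw [← hfun]
    _ = (eLpNorm (F1 - F2 + F3) 2 μ).toReal ^ 2 := aux_int_eq hF
    _ ≤ 4 * η ^ 2 * M ^ 2 * ((k : ℝ) + 1) ^ 2 := by
        have b1 : (eLpNorm F1 2 μ).toReal ≤ 2 * η * M * (k:ℝ) := by
          rw [hF1def, aux_smul]
          have hsum : (eLpNorm (∑ j ∈ K, X j) 2 μ).toReal ≤ (S:ℝ) * (2 * η * M * (k:ℝ)) := by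
            refine (aux_sum K X hXmem).trans ?_
            have : ∀ j ∈ K, (eLpNorm (X j) 2 μ).toReal ≤ 2 * η * M * (k:ℝ) := fun j hj =>
              aux_le_of_int (hXmem j hj) (by positivity) (by nlinarith [hX j hj])
            calc ∑ j ∈ K, (eLpNorm (X j) 2 μ).toReal ≤ ∑ _j ∈ K, (2 * η * M * (k:ℝ)) :=
                  Finset.sum_le_sum this
              _ = (S:ℝ) * (2 * η * M * (k:ℝ)) := by rw [Finset.sum_const, hK]; simp [mul_comm]
          rw [abs_of_nonneg (inv_nonneg.2 hSpos.le)]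
          calc ((S:ℝ))⁻¹ * (eLpNorm (∑ j ∈ K, X j) 2 μ).toReal
              ≤ ((S:ℝ))⁻¹ * ((S:ℝ) * (2 * η * M * (k:ℝ))) := by
                exact mul_le_mul_of_nonneg_left hsum (inv_nonneg.2 hSpos.le)
            _ = 2 * η * M * (k:ℝ) := by field_simp
        have b2 : (eLpNorm F2 2 μ).toReal ≤ η * M := by
          rw [hF2def, aux_smul, abs_of_nonneg hη]
          exact mul_le_mul_of_nonneg_left (aux_le_of_int hGmem hM hG) hη
        have b3 : (eLpNorm F3 2 μ).toReal ≤ η * M := by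
          rw [hF3def, aux_smul, abs_of_nonneg (by positivity)]
          have hsum : (eLpNorm (∑ j ∈ K.erase i, H j) 2 μ).toReal ≤ (S:ℝ) * M := by
            refine (aux_sum _ H hHmem).trans ?_
            calc ∑ j ∈ K.erase i, (eLpNorm (H j) 2 μ).toReal ≤ ∑ _j ∈ K.erase i, M :=
                  Finset.sum_le_sum fun j hj => aux_le_of_int (hHmem j hj) hM (hH j hj)
              _ = ((K.erase i).card : ℝ) * M := by rw [Finset.sum_const]; simp [mul_comm]
              _ ≤ (S:ℝ) * M := by
                  refine mul_le_mul_of_nonneg_right ?_ hM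
                  exact_mod_cast hK ▸ Finset.card_le_card (Finset.erase_subset i K)
          calc η / (S:ℝ) * (eLpNorm (∑ j ∈ K.erase i, H j) 2 μ).toReal
              ≤ η / (S:ℝ) * ((S:ℝ) * M) := mul_le_mul_of_nonneg_left hsum (by positivity)
            _ = η * M := by field_simp
        have hsub : (eLpNorm (F1 - F2) 2 μ).toReal
            ≤ (eLpNorm F1 2 μ).toReal + (eLpNorm F2 2 μ).toReal := by
          have h := aux_add hF1 hF2.neg
          simpa [sub_eq_add_neg, eLpNorm_neg] using h
        have htot : (eLpNorm (F1 - F2 + F3) 2 μ).toReal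
            ≤ 2 * η * M * (k:ℝ) + η * M + η * M := by
          have h := aux_add (hF1.sub hF2) hF3
          linarith
        have h0 : (0:ℝ) ≤ (eLpNorm (F1 - F2 + F3) 2 μ).toReal := ENNReal.toReal_nonneg
        nlinarith [htot, h0, sq_nonneg (2 * η * M * ((k:ℝ)+1))]
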